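/- Let A be an invertible real matrix with singular values in [σ, Σ] (0 < σ ≤ Σ) whose stage blocks satisfy the bidiagonal sparsity A_{i,j} = 0 unless 0 ≤ i−j ≤ 1 (for stage indices i,j ∈ {1,…,N}). Then the stage blocks of the inverse satisfy ‖(A⁻¹)_{i,j}‖ ≤ (Σ/σ²) · ρ^{max(|i−j|−1,0)}, where ρ := (Σ²−σ²)/(Σ²+σ²). -/

import Mathlib

open Matrix

/-- Induced ℓ²-operator norm of a real matrix. -/
noncomputable def opNorm {α β : Type*} [Fintype α] [Fintype β] [DecidableEq β]
    (M : Matrix α β ℝ) : ℝ :=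
  ‖LinearMap.toContinuousLinearMap (Matrix.toEuclideanLin M)‖

open scoped Matrix.Norms.L2Operator

set_option linter.unusedSectionVars false
set_option maxHeartbeats 1600000

section Aux

variable {α β γ δ : Type*} [Fintype α] [Fintype β] [DecidableEq α] [DecidableEq β]
  [Fintype γ] [Fintype δ] [DecidableEq γ] [DecidableEq δ]

lemma norm_sq_mulVec' (M : Matrix α β ℝ) (x : β → ℝ) :
    (∑ a, (M *ᵥ x) a ^ 2) ≤ ‖M‖ ^ 2 * ∑ b, x b ^ 2 := by
  have h := M.l2_opNorm_mulVec ((WithLp.equiv 2 (β → ℝ)).symm x)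
  have h1 : ‖(EuclideanSpace.equiv α ℝ).symm (M *ᵥ x)‖ = Real.sqrt (∑ a, (M *ᵥ x) a ^ 2) := by
    rw [EuclideanSpace.norm_eq]
    simp [Real.norm_eq_abs, sq_abs]
  have h2 : ‖(WithLp.equiv 2 (β → ℝ)).symm x‖ = Real.sqrt (∑ b, x b ^ 2) := by
    rw [EuclideanSpace.norm_eq]
    simp [Real.norm_eq_abs, sq_abs]
  have h3 : M *ᵥ (WithLp.equiv 2 (β → ℝ)) ((WithLp.equiv 2 (β → ℝ)).symm x) = M *ᵥ x := by simp
  rw [h2] at h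
  have h' : ‖(EuclideanSpace.equiv α ℝ).symm (M *ᵥ x)‖ ≤ ‖M‖ * Real.sqrt (∑ b, x b ^ 2) := by
    simpa [h3] using h
  rw [h1] at h'
  have hnn : (0:ℝ) ≤ ∑ a, (M *ᵥ x) a ^ 2 := Finset.sum_nonneg fun _ _ => sq_nonneg _
  nlinarith [Real.sq_sqrt hnn, Real.sqrt_nonneg (∑ a, (M *ᵥ x) a ^ 2),
    Real.sq_sqrt (Finset.sum_nonneg (fun b _ => sq_nonneg (x b)) : (0:ℝ) ≤ ∑ b, x b ^ 2),
    Real.sqrt_nonneg (∑ b, x b ^ 2), norm_nonneg M]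

lemma norm_le_of_mulVec' (M : Matrix α β ℝ) (C : ℝ) (hC : 0 ≤ C)
    (h : ∀ x : β → ℝ, (∑ a, (M *ᵥ x) a ^ 2) ≤ C ^ 2 * ∑ b, x b ^ 2) : ‖M‖ ≤ C := by
  rw [l2_opNorm_def]
  apply ContinuousLinearMap.opNorm_le_bound _ hC
  intro x
  have hx : ‖x‖ = Real.sqrt (∑ b, ((WithLp.equiv 2 (β → ℝ)) x) b ^ 2) := by
    rw [EuclideanSpace.norm_eq]
    simp [Real.norm_eq_abs, sq_abs]
  have happ : (LinearEquiv.trans Matrix.toEuclideanLin LinearMap.toContinuousLinearMap M) x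
      = (WithLp.equiv 2 (α → ℝ)).symm (M *ᵥ (WithLp.equiv 2 (β → ℝ)) x) := by
    simp [Matrix.toEuclideanLin_apply]
  rw [happ]
  have h1 : ‖(WithLp.equiv 2 (α → ℝ)).symm (M *ᵥ (WithLp.equiv 2 (β → ℝ)) x)‖
      = Real.sqrt (∑ a, (M *ᵥ (WithLp.equiv 2 (β → ℝ)) x) a ^ 2) := by
    rw [EuclideanSpace.norm_eq]
    simp [Real.norm_eq_abs, sq_abs]
  rw [h1, hx]
  set y := (WithLp.equiv 2 (β → ℝ)) x
  calc Real.sqrt (∑ a, (M *ᵥ y) a ^ 2) ≤ Real.sqrt (C ^ 2 * ∑ b, y b ^ 2) :=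
        Real.sqrt_le_sqrt (h y)
    _ = C * Real.sqrt (∑ b, y b ^ 2) := by
        rw [Real.sqrt_mul (sq_nonneg C), Real.sqrt_sq hC]

lemma norm_submatrix_le' (M : Matrix α β ℝ) (f : γ → α) (g : δ → β)
    (hf : Function.Injective f) (hg : Function.Injective g) :
    ‖M.submatrix f g‖ ≤ ‖M‖ := by
  apply norm_le_of_mulVec' _ _ (norm_nonneg M)
  intro x
  set x' : β → ℝ := fun b => ∑ d, if g d = b then x d else 0 with hx'
  have key : ∀ c, (M.submatrix f g *ᵥ x) c = (M *ᵥ x') (f c) := by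
    intro c
    simp only [mulVec, dotProduct, submatrix_apply, hx', Finset.mul_sum, mul_ite, mul_zero]
    rw [Finset.sum_comm]
    congr 1; ext d
    rw [Finset.sum_ite_eq Finset.univ (g d) (fun b => M (f c) b * x d)]
    simp
  have hsum : ∑ b, x' b ^ 2 = ∑ d, x d ^ 2 := by
    have himg : ∀ b, b ∉ Finset.univ.image g → x' b = 0 := by
      intro b hb
      simp only [hx']
      apply Finset.sum_eq_zero
      intro d _
      rw [if_neg]
      intro hgd
      exact hb (Finset.mem_image.mpr ⟨d, Finset.mem_univ d, hgd⟩)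
    have hval : ∀ d, x' (g d) = x d := by
      intro d
      simp only [hx', hg.eq_iff]
      rw [Finset.sum_ite_eq' Finset.univ d (fun d' => x d')]
      simp
    rw [← Finset.sum_subset (Finset.subset_univ (Finset.univ.image g))
      (fun b _ hb => by rw [himg b hb]; ring)]
    rw [Finset.sum_image (fun d _ d' _ h => hg h)]
    exact Finset.sum_congr rfl fun d _ => by rw [hval]
  calc ∑ c, (M.submatrix f g *ᵥ x) c ^ 2 = ∑ c, ((M *ᵥ x') (f c)) ^ 2 := by
        exact Finset.sum_congr rfl fun c _ => by rw [key]
    _ ≤ ∑ a, ((M *ᵥ x') a) ^ 2 := by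
        have himg : (∑ c, ((M *ᵥ x') (f c)) ^ 2)
            = ∑ a ∈ Finset.univ.image f, ((M *ᵥ x') a) ^ 2 :=
          (Finset.sum_image (f := fun a => ((M *ᵥ x') a) ^ 2) fun c _ c' _ h => hf h).symm
        rw [himg]
        exact Finset.sum_le_sum_of_subset_of_nonneg (Finset.subset_univ _)
          (fun a _ _ => sq_nonneg _)
    _ ≤ ‖M‖ ^ 2 * ∑ b, x' b ^ 2 := norm_sq_mulVec' M x'
    _ = ‖M‖ ^ 2 * ∑ d, x d ^ 2 := by rw [hsum]

lemma dot_shift' (B : Matrix α β ℝ) (x : β → ℝ) (y : α → ℝ) :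
    (B *ᵥ x) ⬝ᵥ y = x ⬝ᵥ (Bᵀ *ᵥ y) := by
  rw [Matrix.dotProduct_mulVec, Matrix.vecMul_transpose]

lemma psd_smul_one' {c : ℝ} (hc : 0 ≤ c) : ((c • 1 : Matrix α α ℝ)).PosSemidef := by
  rw [posSemidef_iff_dotProduct_mulVec]
  constructor
  · unfold Matrix.IsHermitian
    rw [conjTranspose_smul, conjTranspose_one]
    simp
  · intro x
    have h1 : ((c • 1 : Matrix α α ℝ)) *ᵥ x = c • x := by
      rw [smul_mulVec, one_mulVec]
    rw [star_trivial, h1, dotProduct_smul]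
    exact smul_nonneg hc (Finset.sum_nonneg fun i _ => mul_self_nonneg _)

lemma psd_smul' {c : ℝ} (hc : 0 ≤ c) {X : Matrix α α ℝ} (hX : X.PosSemidef) :
    (c • X).PosSemidef := by
  rw [posSemidef_iff_dotProduct_mulVec]
  constructor
  · unfold Matrix.IsHermitian
    rw [conjTranspose_smul, hX.1]
    simp
  · intro x
    rw [smul_mulVec, dotProduct_smul]
    exact smul_nonneg hc (hX.dotProduct_mulVec_nonneg x)

lemma norm_le_of_sandwich' (M : Matrix α α ℝ) (hM : Mᵀ = M) (ρ : ℝ) (hρ : 0 ≤ ρ)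
    (hP : (ρ • 1 - M).PosSemidef) (hQ : (ρ • 1 + M).PosSemidef) : ‖M‖ ≤ ρ := by
  apply norm_le_of_mulVec' M ρ hρ
  intro x
  have key : ∀ t : ℝ, ρ < t → (∑ a, (M *ᵥ x) a ^ 2) ≤ t ^ 2 * ∑ b, x b ^ 2 := by
    intro t ht
    have ht0 : 0 < t := lt_of_le_of_lt hρ ht
    set P : Matrix α α ℝ := t • 1 - M with hPdef
    set Q : Matrix α α ℝ := t • 1 + M with hQdef
    have hPpsd : P.PosSemidef := by
      have h : P = (ρ • 1 - M) + (t - ρ) • 1 := by rw [hPdef]; module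
      rw [h]; exact hP.add (psd_smul_one' (by linarith))
    have hQpsd : Q.PosSemidef := by
      have h : Q = (ρ • 1 + M) + (t - ρ) • 1 := by rw [hQdef]; module
      rw [h]; exact hQ.add (psd_smul_one' (by linarith))
    have hPt : Pᵀ = P := by rw [hPdef]; simp [transpose_smul, hM]
    have hQt : Qᵀ = Q := by rw [hQdef]; simp [transpose_smul, hM]
    have hPQ : P * Q = (t * t) • (1 : Matrix α α ℝ) - M * M := by
      rw [hPdef, hQdef]
      simp only [Matrix.sub_mul, Matrix.mul_add, smul_mul_assoc, mul_smul_comm,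
        smul_smul, Matrix.one_mul, Matrix.mul_one]
      module
    have hQP : Q * P = (t * t) • (1 : Matrix α α ℝ) - M * M := by
      rw [hPdef, hQdef]
      simp only [Matrix.add_mul, Matrix.mul_sub, smul_mul_assoc, mul_smul_comm,
        smul_smul, Matrix.one_mul, Matrix.mul_one]
      module
    have hcomm : P * Q = Q * P := by rw [hPQ, hQP]
    have h1 : (0:ℝ) ≤ (Q *ᵥ x) ⬝ᵥ (P *ᵥ (Q *ᵥ x)) := by
      simpa using hPpsd.dotProduct_mulVec_nonneg (Q *ᵥ x)
    have h2 : (0:ℝ) ≤ (P *ᵥ x) ⬝ᵥ (Q *ᵥ (P *ᵥ x)) := by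
      simpa using hQpsd.dotProduct_mulVec_nonneg (P *ᵥ x)
    have e1 : (Q *ᵥ x) ⬝ᵥ (P *ᵥ (Q *ᵥ x)) = x ⬝ᵥ ((Q * (P * Q)) *ᵥ x) := by
      rw [dot_shift', hQt, mulVec_mulVec, mulVec_mulVec, ← Matrix.mul_assoc]
    have e2 : (P *ᵥ x) ⬝ᵥ (Q *ᵥ (P *ᵥ x)) = x ⬝ᵥ ((P * (Q * P)) *ᵥ x) := by
      rw [dot_shift', hPt, mulVec_mulVec, mulVec_mulVec, ← Matrix.mul_assoc]
    have hsum : Q * (P * Q) + P * (Q * P) = (2 * t) • (P * Q) := by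
      rw [hcomm, ← Matrix.add_mul]
      have hadd : Q + P = (2 * t) • (1 : Matrix α α ℝ) := by
        rw [hPdef, hQdef]; module
      rw [hadd, smul_mul_assoc, Matrix.one_mul]
    have h3 : (0:ℝ) ≤ x ⬝ᵥ ((P * Q) *ᵥ x) := by
      have h4 : (0:ℝ) ≤ x ⬝ᵥ (((2 * t) • (P * Q)) *ᵥ x) := by
        rw [← hsum, Matrix.add_mulVec, dotProduct_add, ← e1, ← e2]
        linarith
      rw [smul_mulVec, dotProduct_smul, smul_eq_mul] at h4
      nlinarith
    rw [hPQ, Matrix.sub_mulVec, dotProduct_sub, sub_nonneg, smul_mulVec, one_mulVec,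
      dotProduct_smul, smul_eq_mul] at h3
    have hLHS : (∑ a, (M *ᵥ x) a ^ 2) = x ⬝ᵥ ((M * M) *ᵥ x) := by
      have h5 : (∑ a, (M *ᵥ x) a ^ 2) = (M *ᵥ x) ⬝ᵥ (M *ᵥ x) := by
        simp [dotProduct, sq]
      rw [h5, dot_shift', hM, mulVec_mulVec]
    have hRHS : x ⬝ᵥ x = ∑ b, x b ^ 2 := by simp [dotProduct, sq]
    rw [hLHS]
    calc x ⬝ᵥ ((M*M) *ᵥ x) ≤ t * t * (x ⬝ᵥ x) := h3
      _ = t ^ 2 * ∑ b, x b ^ 2 := by rw [hRHS]; ring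
  have tends : Filter.Tendsto (fun t : ℝ => t ^ 2 * ∑ b, x b ^ 2)
      (nhdsWithin ρ (Set.Ioi ρ)) (nhds (ρ ^ 2 * ∑ b, x b ^ 2)) :=
    (((continuous_pow 2).mul continuous_const).continuousAt).tendsto.mono_left nhdsWithin_le_nhds
  exact ge_of_tendsto tends (eventually_nhdsWithin_of_forall fun t ht => key t ht)

lemma norm_one_le' : ‖(1 : Matrix α α ℝ)‖ ≤ 1 := by
  apply norm_le_of_mulVec' _ _ zero_le_one
  intro x
  simp [one_mulVec]

end Aux

section Band

variable {N n : ℕ}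

/-- block-band predicate -/
def IsBand (k : ℕ) (B : Matrix (Fin N × Fin n) (Fin N × Fin n) ℝ) : Prop :=
  ∀ (i j : Fin N) (a b : Fin n), (k:ℤ) < |(i : ℤ) - (j : ℤ)| → B (i,a) (j,b) = 0

lemma IsBand.mono {k l : ℕ} {B : Matrix (Fin N × Fin n) (Fin N × Fin n) ℝ}
    (hkl : k ≤ l) (hB : IsBand k B) : IsBand l B := by
  intro i j a b h
  exact hB i j a b (lt_of_le_of_lt (by exact_mod_cast hkl) h)

lemma isBand_one : IsBand (N := N) (n := n) 0 1 := by
  intro i j a b h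
  apply Matrix.one_apply_ne
  intro he
  have : i = j := (Prod.mk.injEq _ _ _ _ ▸ he).1
  subst this
  simp at h

lemma IsBand.mul {k l : ℕ} {B C : Matrix (Fin N × Fin n) (Fin N × Fin n) ℝ}
    (hB : IsBand k B) (hC : IsBand l C) : IsBand (k + l) (B * C) := by
  intro i j a b h
  rw [Matrix.mul_apply]
  apply Finset.sum_eq_zero
  rintro ⟨p, c⟩ _
  by_cases h1 : (k:ℤ) < |(i : ℤ) - (p : ℤ)|
  · rw [hB i p a c h1, zero_mul]
  · push_neg at h1
    have tri := abs_sub_le (i : ℤ) (p : ℤ) (j : ℤ)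
    have h2 : (l:ℤ) < |(p : ℤ) - (j : ℤ)| := by
      push_cast at h ⊢
      linarith
    rw [hC p j c b h2, mul_zero]

lemma IsBand.pow {B : Matrix (Fin N × Fin n) (Fin N × Fin n) ℝ}
    (hB : IsBand 1 B) : ∀ k, IsBand k (B ^ k) := by
  intro k
  induction k with
  | zero => rw [pow_zero]; exact isBand_one
  | succ k ih =>
      rw [pow_succ]
      exact (ih.mul hB : IsBand (k + 1) _)

end Band

theorem stmt_6 {N n : ℕ} (A : Matrix (Fin N × Fin n) (Fin N × Fin n) ℝ) (sig Sig : ℝ)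
    (hinv : IsUnit A) (hsig : 0 < sig) (hle : sig ≤ Sig)
    (hlo : (Aᵀ * A - sig ^ 2 • (1 : Matrix (Fin N × Fin n) (Fin N × Fin n) ℝ)).PosSemidef)
    (hhi : (Sig ^ 2 • (1 : Matrix (Fin N × Fin n) (Fin N × Fin n) ℝ) - Aᵀ * A).PosSemidef)
    (hband : ∀ (i j : Fin N) (a b : Fin n),
      ¬(0 ≤ (i : ℤ) - (j : ℤ) ∧ (i : ℤ) - (j : ℤ) ≤ 1) → A (i, a) (j, b) = 0) :
    ∀ i j : Fin N,
      opNorm (Matrix.of fun (a b : Fin n) => A⁻¹ (i, a) (j, b)) ≤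
        (Sig / sig ^ 2) *
          ((Sig ^ 2 - sig ^ 2) / (Sig ^ 2 + sig ^ 2)) ^ (((i : ℤ) - (j : ℤ)).natAbs - 1) := by
  intro i j
  classical
  -- scalar setup
  set ρ : ℝ := (Sig ^ 2 - sig ^ 2) / (Sig ^ 2 + sig ^ 2) with hρdef
  have hden : (0:ℝ) < Sig ^ 2 + sig ^ 2 := by positivity
  have hsig2 : (0:ℝ) < sig ^ 2 := by positivity
  have hSig : 0 < Sig := lt_of_lt_of_le hsig hle
  have hsq : sig ^ 2 ≤ Sig ^ 2 := by nlinarith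
  have hρ0 : 0 ≤ ρ := div_nonneg (by linarith) hden.le
  have hρ1 : ρ < 1 := by rw [hρdef, div_lt_one hden]; nlinarith
  set c : ℝ := 2 / (Sig ^ 2 + sig ^ 2) with hcdef
  have hc0 : 0 < c := by positivity
  have hc1 : 1 - ρ = c * sig ^ 2 := by
    rw [hρdef, hcdef]; field_simp; ring
  have hc2 : 1 + ρ = c * Sig ^ 2 := by
    rw [hρdef, hcdef]; field_simp; ring
  set S := Aᵀ * A with hSdef
  set M := (1 : Matrix (Fin N × Fin n) (Fin N × Fin n) ℝ) - c • S with hMdef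
  have hSt : Sᵀ = S := by rw [hSdef, transpose_mul, transpose_transpose]
  have hMt : Mᵀ = M := by
    rw [hMdef, transpose_sub, transpose_smul, transpose_one, hSt]
  -- sandwich bounds for M
  have hMP : (ρ • 1 - M).PosSemidef := by
    have he : ρ • (1 : Matrix (Fin N × Fin n) (Fin N × Fin n) ℝ) - M
        = c • (S - sig ^ 2 • 1) := by
      rw [hMdef, smul_sub, smul_smul, ← hc1]
      module
    rw [he]
    exact psd_smul' hc0.le hlo
  have hMQ : (ρ • 1 + M).PosSemidef := by
    have he : ρ • (1 : Matrix (Fin N × Fin n) (Fin N × Fin n) ℝ) + M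
        = c • (Sig ^ 2 • 1 - S) := by
      rw [smul_sub, smul_smul, ← hc2, hMdef]
      module
    rw [he]
    exact psd_smul' hc0.le hhi
  have hMnorm : ‖M‖ ≤ ρ := norm_le_of_sandwich' M hMt ρ hρ0 hMP hMQ
  have hMk : ∀ k : ℕ, ‖M ^ k‖ ≤ ρ ^ k := by
    intro k
    induction k with
    | zero => simpa using norm_one_le'
    | succ k ih =>
        rw [pow_succ, pow_succ]
        calc ‖M ^ k * M‖ ≤ ‖M ^ k‖ * ‖M‖ := Matrix.l2_opNorm_mul _ _
          _ ≤ ρ ^ k * ρ :=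
            mul_le_mul ih hMnorm (norm_nonneg _) (pow_nonneg hρ0 k)
  -- bound on ‖A‖ and ‖Aᵀ‖
  have hAle : ‖A‖ ≤ Sig := by
    apply norm_le_of_mulVec' A Sig hSig.le
    intro x
    have h0 := hhi.dotProduct_mulVec_nonneg x
    rw [star_trivial, Matrix.sub_mulVec, dotProduct_sub, sub_nonneg, smul_mulVec,
      one_mulVec, dotProduct_smul, smul_eq_mul] at h0
    have hL : (∑ a, (A *ᵥ x) a ^ 2) = x ⬝ᵥ (S *ᵥ x) := by
      have h5 : (∑ a, (A *ᵥ x) a ^ 2) = (A *ᵥ x) ⬝ᵥ (A *ᵥ x) := by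
        simp [dotProduct, sq]
      rw [h5, dot_shift', mulVec_mulVec, ← hSdef]
    have hR : x ⬝ᵥ x = ∑ b, x b ^ 2 := by simp [dotProduct, sq]
    rw [hL]
    rw [hR] at h0
    exact h0
  have hAtle : ‖Aᵀ‖ ≤ Sig := by
    have hh : Aᴴ = Aᵀ := by
      ext p q
      simp [conjTranspose_apply]
    rw [← hh, Matrix.l2_opNorm_conjTranspose]
    exact hAle
  -- band facts
  have hAt1 : IsBand 1 Aᵀ := by
    intro i' j' a b h
    push_cast at h
    rw [transpose_apply]
    apply hband
    rintro ⟨h1, h2⟩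
    have h3 : |(i' : ℤ) - (j' : ℤ)| ≤ 1 := by
      rw [abs_sub_comm]
      exact abs_le.mpr ⟨by linarith, h2⟩
    linarith
  have hS1 : IsBand 1 S := by
    intro i' j' a b h
    push_cast at h
    rw [hSdef, Matrix.mul_apply]
    apply Finset.sum_eq_zero
    rintro ⟨p, e⟩ _
    by_cases hpi : 0 ≤ (p : ℤ) - (i' : ℤ) ∧ (p : ℤ) - (i' : ℤ) ≤ 1
    · have hpj : ¬(0 ≤ (p : ℤ) - (j' : ℤ) ∧ (p : ℤ) - (j' : ℤ) ≤ 1) := by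
        rintro ⟨h1, h2⟩
        have h3 : |(i' : ℤ) - (j' : ℤ)| ≤ 1 := abs_le.mpr ⟨by linarith [hpi.1, hpi.2], by linarith [hpi.1, hpi.2]⟩
        linarith
      rw [hband p j' e b hpj, mul_zero]
    · rw [transpose_apply, hband p i' e a hpi, zero_mul]
  have hM1 : IsBand 1 M := by
    intro i' j' a b h
    rw [hMdef, Matrix.sub_apply, Matrix.smul_apply,
      (isBand_one.mono (Nat.zero_le 1)) i' j' a b h, hS1 i' j' a b h, smul_zero, sub_zero]
  have hMAt : ∀ k : ℕ, IsBand (k + 1) (M ^ k * Aᵀ) := fun k => (hM1.pow k).mul hAt1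
  -- inverse facts
  have hdet : IsUnit A.det := (Matrix.isUnit_iff_isUnit_det A).mp hinv
  have hAAi : A * A⁻¹ = 1 := Matrix.mul_nonsing_inv A hdet
  -- Neumann-type identity
  have hmain : ∀ K : ℕ,
      A⁻¹ = c • ((∑ k ∈ Finset.range K, M ^ k) * Aᵀ) + M ^ K * A⁻¹ := by
    intro K
    set G := ∑ k ∈ Finset.range K, M ^ k with hG
    have hgs : G * (1 - M) = 1 - M ^ K := by
      have hgm := geom_sum_mul M K
      have h2 : G * M - G * 1 = M ^ K - 1 := by rw [← Matrix.mul_sub]; exact hgm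
      have h3 : G * (1 - M) = G * 1 - G * M := Matrix.mul_sub G 1 M
      calc G * (1 - M) = G * 1 - G * M := h3
        _ = -(G * M - G * 1) := (neg_sub _ _).symm
        _ = -(M ^ K - 1) := by rw [h2]
        _ = 1 - M ^ K := neg_sub _ _
    have h1M : (1 : Matrix (Fin N × Fin n) (Fin N × Fin n) ℝ) - M = c • S := by
      rw [hMdef]; module
    have h2 : c • (G * Aᵀ) * A = 1 - M ^ K := by
      rw [smul_mul_assoc, Matrix.mul_assoc, ← hSdef, ← mul_smul_comm, ← h1M, hgs]
    calc A⁻¹ = ((1 - M ^ K) + M ^ K) * A⁻¹ := by rw [sub_add_cancel, Matrix.one_mul]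
      _ = (c • (G * Aᵀ) * A) * A⁻¹ + M ^ K * A⁻¹ := by rw [h2, Matrix.add_mul]
      _ = c • (G * Aᵀ) + M ^ K * A⁻¹ := by rw [Matrix.mul_assoc, hAAi, Matrix.mul_one]
  -- block machinery
  have hfinj : Function.Injective (fun a : Fin n => ((i, a) : Fin N × Fin n)) := by
    intro a a' h; exact congrArg Prod.snd h
  have hginj : Function.Injective (fun b : Fin n => ((j, b) : Fin N × Fin n)) := by
    intro a a' h; exact congrArg Prod.snd h
  set Blk : Matrix (Fin N × Fin n) (Fin N × Fin n) ℝ → Matrix (Fin n) (Fin n) ℝ :=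
    fun X => X.submatrix (fun a => (i, a)) (fun b => (j, b)) with hBlkdef
  have hBlknorm : ∀ X, ‖Blk X‖ ≤ ‖X‖ := fun X =>
    norm_submatrix_le' X _ _ hfinj hginj
  set d : ℕ := ((i : ℤ) - (j : ℤ)).natAbs with hd
  set m : ℕ := d - 1 with hm
  have hdabs : ((d : ℕ) : ℤ) = |(i : ℤ) - (j : ℤ)| := by
    rw [hd]; exact (Int.abs_eq_natAbs _).symm
  have hzero : ∀ k : ℕ, k < m → Blk (M ^ k * Aᵀ) = 0 := by
    intro k hk
    ext a b
    rw [hBlkdef]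
    simp only [Matrix.submatrix_apply, Matrix.zero_apply]
    apply hMAt k i j a b
    rw [← hdabs]
    exact_mod_cast by omega
  -- geometric sum bound
  have hgeo : ∀ L : ℕ, (∑ jj ∈ Finset.range L, ρ ^ jj) ≤ 1 / (1 - ρ) := by
    intro L
    have h1ρ : 0 < 1 - ρ := by linarith
    rw [le_div_iff₀ h1ρ]
    have hgm : (∑ jj ∈ Finset.range L, ρ ^ jj) * (ρ - 1) = ρ ^ L - 1 := geom_sum_mul ρ L
    nlinarith [pow_nonneg hρ0 L]
  -- key bound for each truncation K
  have hCkey : ∀ K : ℕ, ‖Blk A⁻¹‖ ≤ (Sig / sig ^ 2) * ρ ^ m + ρ ^ K * ‖A⁻¹‖ := by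
    intro K
    have hsum_mul : (∑ k ∈ Finset.range K, M ^ k) * Aᵀ
        = ∑ k ∈ Finset.range K, M ^ k * Aᵀ := Finset.sum_mul _ _ _
    have hsplit : Blk A⁻¹
        = c • (∑ k ∈ Finset.range K, Blk (M ^ k * Aᵀ)) + Blk (M ^ K * A⁻¹) := by
      conv_lhs => rw [hmain K]
      rw [hsum_mul, hBlkdef]
      ext a b
      simp only [Matrix.submatrix_apply, Matrix.add_apply, Matrix.smul_apply,
        Matrix.sum_apply, smul_eq_mul]
    rw [hsplit]
    have hterm : ∀ k ∈ (Finset.range K).filter (fun k => m ≤ k),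
        ‖Blk (M ^ k * Aᵀ)‖ ≤ Sig * ρ ^ k := by
      intro k _
      calc ‖Blk (M ^ k * Aᵀ)‖ ≤ ‖M ^ k * Aᵀ‖ := hBlknorm _
        _ ≤ ‖M ^ k‖ * ‖Aᵀ‖ := Matrix.l2_opNorm_mul _ _
        _ ≤ ρ ^ k * Sig :=
          mul_le_mul (hMk k) hAtle (norm_nonneg _) (pow_nonneg hρ0 k)
        _ = Sig * ρ ^ k := by ring
    have hsum1 : (∑ k ∈ Finset.range K, ‖Blk (M ^ k * Aᵀ)‖)
        = ∑ k ∈ (Finset.range K).filter (fun k => m ≤ k), ‖Blk (M ^ k * Aᵀ)‖ := by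
      symm
      apply Finset.sum_subset (Finset.filter_subset _ _)
      intro k hk hnk
      have hkm : k < m := by
        simp only [Finset.mem_filter, hk, true_and, not_le] at hnk
        exact hnk
      rw [hzero k hkm, norm_zero]
    have hsum2 : (∑ k ∈ (Finset.range K).filter (fun k => m ≤ k), ‖Blk (M ^ k * Aᵀ)‖)
        ≤ ∑ k ∈ (Finset.range K).filter (fun k => m ≤ k), Sig * ρ ^ k :=
      Finset.sum_le_sum hterm
    have hsub : (Finset.range K).filter (fun k => m ≤ k) ⊆ Finset.Ico m (m + K) := by
      intro k hk
      simp only [Finset.mem_filter, Finset.mem_range] at hk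
      exact Finset.mem_Ico.mpr ⟨hk.2, by omega⟩
    have hsum3 : (∑ k ∈ (Finset.range K).filter (fun k => m ≤ k), Sig * ρ ^ k)
        ≤ ∑ k ∈ Finset.Ico m (m + K), Sig * ρ ^ k :=
      Finset.sum_le_sum_of_subset_of_nonneg hsub
        (fun k _ _ => mul_nonneg hSig.le (pow_nonneg hρ0 k))
    have hsum4 : (∑ k ∈ Finset.Ico m (m + K), Sig * ρ ^ k)
        = Sig * (ρ ^ m * ∑ jj ∈ Finset.range K, ρ ^ jj) := by
      rw [Finset.sum_Ico_eq_sum_range]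
      simp only [Nat.add_sub_cancel_left]
      rw [← Finset.mul_sum, Finset.mul_sum, ← Finset.mul_sum]
      congr 1
      rw [Finset.mul_sum]
      exact Finset.sum_congr rfl fun jj _ => by rw [pow_add]
    have hsum5 : (∑ k ∈ Finset.range K, ‖Blk (M ^ k * Aᵀ)‖)
        ≤ Sig * (ρ ^ m * (1 / (1 - ρ))) := by
      rw [hsum1]
      refine le_trans (le_trans hsum2 hsum3) ?_
      rw [hsum4]
      exact mul_le_mul_of_nonneg_left
        (mul_le_mul_of_nonneg_left (hgeo K) (pow_nonneg hρ0 m)) hSig.le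
    have hlast : ‖Blk (M ^ K * A⁻¹)‖ ≤ ρ ^ K * ‖A⁻¹‖ := by
      calc ‖Blk (M ^ K * A⁻¹)‖ ≤ ‖M ^ K * A⁻¹‖ := hBlknorm _
        _ ≤ ‖M ^ K‖ * ‖A⁻¹‖ := Matrix.l2_opNorm_mul _ _
        _ ≤ ρ ^ K * ‖A⁻¹‖ :=
          mul_le_mul_of_nonneg_right (hMk K) (norm_nonneg _)
    have hconst : c * (Sig * (ρ ^ m * (1 / (1 - ρ)))) = (Sig / sig ^ 2) * ρ ^ m := by
      have h1ρ : 1 - ρ = c * sig ^ 2 := hc1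
      rw [h1ρ]
      field_simp
    calc ‖c • (∑ k ∈ Finset.range K, Blk (M ^ k * Aᵀ)) + Blk (M ^ K * A⁻¹)‖
        ≤ ‖c • (∑ k ∈ Finset.range K, Blk (M ^ k * Aᵀ))‖ + ‖Blk (M ^ K * A⁻¹)‖ :=
          norm_add_le _ _
      _ ≤ c * (∑ k ∈ Finset.range K, ‖Blk (M ^ k * Aᵀ)‖) + ρ ^ K * ‖A⁻¹‖ := by
          refine add_le_add ?_ hlast
          rw [norm_smul, Real.norm_eq_abs, abs_of_pos hc0]
          exact mul_le_mul_of_nonneg_left (norm_sum_le _ _) hc0.le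
      _ ≤ c * (Sig * (ρ ^ m * (1 / (1 - ρ)))) + ρ ^ K * ‖A⁻¹‖ :=
          add_le_add (mul_le_mul_of_nonneg_left hsum5 hc0.le) le_rfl
      _ = (Sig / sig ^ 2) * ρ ^ m + ρ ^ K * ‖A⁻¹‖ := by rw [hconst]
  -- pass to the limit K → ∞
  have hlim : Filter.Tendsto (fun K : ℕ => (Sig / sig ^ 2) * ρ ^ m + ρ ^ K * ‖A⁻¹‖)
      Filter.atTop (nhds ((Sig / sig ^ 2) * ρ ^ m + 0 * ‖A⁻¹‖)) := by
    apply Filter.Tendsto.add tendsto_const_nhds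
    exact (tendsto_pow_atTop_nhds_zero_of_lt_one hρ0 hρ1).mul_const _
  have hfinal : ‖Blk A⁻¹‖ ≤ (Sig / sig ^ 2) * ρ ^ m + 0 * ‖A⁻¹‖ :=
    ge_of_tendsto' hlim hCkey
  rw [zero_mul, add_zero] at hfinal
  exact hfinal
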